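/- Let p be a probability measure on (X,𝒳)⊗(Y,𝒴)⊗(Λ,ℒ), let 𝒟 ⊆ ℒ be a sub-σ-algebra, and suppose that for every J ∈ 𝒳 and K ∈ 𝒴 the function λ ↦ p[J × K‖ℒ]_λ is 𝒟-measurable (for some fixed version). Then for every J ∈ 𝒳, p[J‖𝒴⊗ℒ] = p[J‖𝒴⊗𝒟] p-almost surely. -/

import Mathlib

set_option linter.unusedSectionVars false
set_option maxHeartbeats 1000000
open MeasureTheory MeasurableSpace

section trunchelp
variable {α : Type*}

noncomputable def trunc (f : α → ℝ) : α → ℝ := fun x => max 0 (min 1 (f x))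

lemma trunc_bdd (f : α → ℝ) (x : α) : ‖trunc f x‖ ≤ 1 := by
  simp only [trunc, Real.norm_eq_abs, abs_le]
  constructor
  · linarith [le_max_left (0:ℝ) (min 1 (f x))]
  · exact max_le (by norm_num) (min_le_left _ _)

lemma trunc_sm {m : MeasurableSpace α} {f : α → ℝ} (hf : StronglyMeasurable[m] f) :
    StronglyMeasurable[m] (trunc f) := by
  have : trunc f = ((fun _ => (1:ℝ)) ⊓ f ⊔ fun _ => (0:ℝ)) := by
    funext x
    simp only [trunc, Pi.sup_apply, Pi.inf_apply]
    rw [max_comm]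
  rw [this]
  exact (stronglyMeasurable_const.inf hf).sup stronglyMeasurable_const

lemma trunc_meas {m : MeasurableSpace α} {f : α → ℝ} (hf : Measurable[m] f) :
    Measurable[m] (trunc f) :=
  measurable_const.max (measurable_const.min hf)

lemma trunc_ae_eq {m0 : MeasurableSpace α} {μ : Measure α} {f : α → ℝ}
    (h0 : 0 ≤ᵐ[μ] f) (h1 : f ≤ᵐ[μ] fun _ => (1:ℝ)) :
    trunc f =ᵐ[μ] f := by
  filter_upwards [h0, h1] with x hx0 hx1
  have hx0' : (0:ℝ) ≤ f x := hx0
  simp only [trunc]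
  rw [min_eq_right hx1, max_eq_right hx0']
end trunchelp

section helpers
variable {α : Type*} {m0 : MeasurableSpace α} {μ : Measure α} [IsProbabilityMeasure μ]

/-- duality: integration against a bounded `m`-measurable factor commutes with condexp. -/
lemma aux_dual {m : MeasurableSpace α} (hm : m ≤ m0) {u c : α → ℝ} (hu : Integrable u μ)
    (hc : StronglyMeasurable[m] c) (hcb : ∀ x, ‖c x‖ ≤ 1) :
    ∫ x, c x * (μ[u|m]) x ∂μ = ∫ x, c x * u x ∂μ := by
  have hcm0 : AEStronglyMeasurable[m0] c μ := (hc.mono hm).aestronglyMeasurable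
  have h1 : Integrable (c * u) μ := hu.bdd_mul hcm0 (ae_of_all _ hcb)
  have h2 : μ[c * u|m] =ᵐ[μ] c * μ[u|m] := condExp_mul_of_stronglyMeasurable_left hc h1 hu
  have h3 : ∫ x, (c * μ[u|m]) x ∂μ = ∫ x, (μ[c*u|m]) x ∂μ := integral_congr_ae h2.symm
  rw [show (fun x => c x * (μ[u|m]) x) = c * μ[u|m] from rfl, h3, integral_condExp hm]; rfl

lemma tower {m₁ m₂ : MeasurableSpace α} (h12 : m₁ ≤ m₂) (hm2 : m₂ ≤ m0) {f g : α → ℝ}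
    (hg : StronglyMeasurable[m₁] g) (hgint : Integrable g μ) (hfg : μ[f|m₂] =ᵐ[μ] g) :
    μ[f|m₁] =ᵐ[μ] g :=
  ((condExp_condExp_of_le h12 hm2).symm.trans (condExp_congr_ae hfg)).trans
    (by rw [condExp_of_stronglyMeasurable (h12.trans hm2) hg hgint])

lemma condexp_mem01 {m : MeasurableSpace α} (hm : m ≤ m0) {f : α → ℝ}
    (hfi : Integrable f μ) (h0 : ∀ x, 0 ≤ f x) (h1 : ∀ x, f x ≤ 1) :
    (0 ≤ᵐ[μ] μ[f|m]) ∧ (μ[f|m] ≤ᵐ[μ] fun _ => (1:ℝ)) := by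
  constructor
  · exact condExp_nonneg (ae_of_all _ h0)
  · have := condExp_mono (μ := μ) (m := m) hfi (integrable_const (1:ℝ)) (ae_of_all _ h1)
    rwa [condExp_const hm (1:ℝ)] at this

/-- nice version of a conditional expectation of a [0,1]-valued function -/
lemma nice_condexp {m : MeasurableSpace α} (hm : m ≤ m0) {f : α → ℝ}
    (hfi : Integrable f μ) (h0 : ∀ x, 0 ≤ f x) (h1 : ∀ x, f x ≤ 1) :
    StronglyMeasurable[m] (trunc (μ[f|m])) ∧ (∀ x, ‖trunc (μ[f|m]) x‖ ≤ 1) ∧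
      trunc (μ[f|m]) =ᵐ[μ] μ[f|m] := by
  obtain ⟨ha, hb⟩ := condexp_mem01 hm hfi h0 h1
  exact ⟨trunc_sm stronglyMeasurable_condExp, trunc_bdd _, trunc_ae_eq ha hb⟩

lemma sm_ind_comap {β : Type*} {mβ : MeasurableSpace β} {f : α → β} {m : MeasurableSpace α}
    (hm : MeasurableSpace.comap f mβ ≤ m) {K : Set β} (hK : MeasurableSet[mβ] K) :
    StronglyMeasurable[m] (fun x => Set.indicator K (fun _ => (1:ℝ)) (f x)) := by
  have hs : MeasurableSet[m] (f ⁻¹' K) := hm _ ⟨K, hK, rfl⟩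
  have he : (fun x => Set.indicator K (fun _ => (1:ℝ)) (f x))
      = (f ⁻¹' K).indicator (fun _ => (1:ℝ)) := by
    funext x; by_cases h : f x ∈ K <;> simp [h, Set.indicator_apply]
  rw [he]
  exact stronglyMeasurable_const.indicator hs

lemma ind_bdd {β : Type*} (K : Set β) (f : α → β) (x : α) :
    ‖Set.indicator K (fun _ => (1:ℝ)) (f x)‖ ≤ 1 := by
  by_cases h : f x ∈ K <;> simp [h, Set.indicator_apply]

lemma ind_nonneg {β : Type*} (K : Set β) (f : α → β) (x : α) :
    0 ≤ Set.indicator K (fun _ => (1:ℝ)) (f x) := by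
  by_cases h : f x ∈ K <;> simp [h, Set.indicator_apply]

lemma ind_le_one {β : Type*} (K : Set β) (f : α → β) (x : α) :
    Set.indicator K (fun _ => (1:ℝ)) (f x) ≤ 1 := by
  by_cases h : f x ∈ K <;> simp [h, Set.indicator_apply]

lemma int_bdd_sm {g : α → ℝ} (hg : StronglyMeasurable[m0] g) (hb : ∀ x, ‖g x‖ ≤ 1) :
    Integrable g μ :=
  (integrable_const (1:ℝ)).mono' hg.aestronglyMeasurable (ae_of_all _ hb)

lemma setIntegral_mul_indicator {s : Set α} (hs : MeasurableSet[m0] s) (f : α → ℝ) :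
    ∫ x in s, f x ∂μ = ∫ x, Set.indicator s (fun _ => (1:ℝ)) x * f x ∂μ := by
  rw [← integral_indicator hs]
  congr 1
  funext x
  by_cases h : x ∈ s <;> simp [h, Set.indicator_apply]

lemma step_compl {u v : α → ℝ} {t : Set α}
    (ht : MeasurableSet[m0] t) (hu : Integrable u μ) (hv : Integrable v μ)
    (htot : ∫ x, u x ∂μ = ∫ x, v x ∂μ)
    (hint : ∫ x in t, u x ∂μ = ∫ x in t, v x ∂μ) :
    ∫ x in tᶜ, u x ∂μ = ∫ x in tᶜ, v x ∂μ := by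
  have h1 := integral_add_compl ht hu
  have h2 := integral_add_compl ht hv
  linarith

lemma step_union {u v : α → ℝ} {f : ℕ → Set α}
    (hm : ∀ i, MeasurableSet[m0] (f i)) (hdisj : Pairwise (Function.onFun Disjoint f))
    (hu : Integrable u μ) (hv : Integrable v μ)
    (hint : ∀ i, ∫ x in f i, u x ∂μ = ∫ x in f i, v x ∂μ) :
    ∫ x in ⋃ i, f i, u x ∂μ = ∫ x in ⋃ i, f i, v x ∂μ := by
  rw [integral_iUnion hm hdisj hu.integrableOn, integral_iUnion hm hdisj hv.integrableOn]
  exact tsum_congr hint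

lemma pi_ind (m₁ m₂ : MeasurableSpace α) (h₁ : m₁ ≤ m0) (h₂ : m₂ ≤ m0) {u v : α → ℝ}
    (hu : Integrable u μ) (hv : Integrable v μ)
    (h : ∀ s t : Set α, MeasurableSet[m₁] s → MeasurableSet[m₂] t →
      ∫ x in s ∩ t, u x ∂μ = ∫ x in s ∩ t, v x ∂μ) :
    ∀ s : Set α, MeasurableSet[m₁ ⊔ m₂] s → ∫ x in s, u x ∂μ = ∫ x in s, v x ∂μ := by
  have h_eq : m₁ ⊔ m₂ = MeasurableSpace.generateFrom
      {s : Set α | ∃ s₁ s₂, MeasurableSet[m₁] s₁ ∧ MeasurableSet[m₂] s₂ ∧ s = s₁ ∩ s₂} := by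
    refine le_antisymm (sup_le ?_ ?_) (MeasurableSpace.generateFrom_le ?_)
    · intro s hs
      exact measurableSet_generateFrom ⟨s, Set.univ, hs, MeasurableSet.univ, (Set.inter_univ s).symm⟩
    · intro s hs
      exact measurableSet_generateFrom ⟨Set.univ, s, MeasurableSet.univ, hs, (Set.univ_inter s).symm⟩
    · rintro s ⟨s₁, s₂, hs₁, hs₂, rfl⟩
      exact MeasurableSet.inter ((le_sup_left : m₁ ≤ m₁ ⊔ m₂) _ hs₁)
        ((le_sup_right : m₂ ≤ m₁ ⊔ m₂) _ hs₂)
  have h_pi : IsPiSystem {s : Set α | ∃ s₁ s₂, MeasurableSet[m₁] s₁ ∧ MeasurableSet[m₂] s₂ ∧ s = s₁ ∩ s₂} := by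
    rintro s ⟨s₁, s₂, hs₁, hs₂, rfl⟩ t ⟨t₁, t₂, ht₁, ht₂, rfl⟩ -
    refine ⟨s₁ ∩ t₁, s₂ ∩ t₂, hs₁.inter ht₁, hs₂.inter ht₂, ?_⟩
    ext x; simp only [Set.mem_inter_iff]; tauto
  have hsup_le : m₁ ⊔ m₂ ≤ m0 := sup_le h₁ h₂
  have htot : ∫ x, u x ∂μ = ∫ x, v x ∂μ := by
    have := h Set.univ Set.univ MeasurableSet.univ MeasurableSet.univ
    rwa [Set.univ_inter, Measure.restrict_univ] at this
  intro s hs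
  refine MeasurableSpace.induction_on_inter (C := fun t _ => ∫ x in t, u x ∂μ = ∫ x in t, v x ∂μ)
    h_eq h_pi ?_ ?_ ?_ ?_ s hs
  · simp
  · rintro t ⟨t₁, t₂, ht₁, ht₂, rfl⟩; exact h t₁ t₂ ht₁ ht₂
  · intro t ht hint
    exact step_compl (m0 := m0) (hsup_le _ ht) hu hv htot hint
  · intro f hdisj hmeas hint
    exact step_union (m0 := m0) (fun i => hsup_le _ (hmeas i)) hdisj hu hv hint
end helpers

section prod
variable {X Y Λ : Type*} [mX : MeasurableSpace X] [mY : MeasurableSpace Y]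
  [mΛ : MeasurableSpace Λ]

local notation "mP" => (@Prod.instMeasurableSpace X (Y × Λ) mX (@Prod.instMeasurableSpace Y Λ mY mΛ))

/-- nice version of the factorizing function from `hfac`, simultaneously a version of the
conditional expectation w.r.t. `comap π mΛ` and w.r.t. `comap π D`. -/
lemma key (p : Measure (X × Y × Λ)) [IsProbabilityMeasure p]
    (D : MeasurableSpace Λ) (hDsub : D ≤ mΛ)
    (J : Set X) (K : Set Y) (hJ : MeasurableSet[mX] J) (hK : MeasurableSet[mY] K)
    (g0 : Λ → ℝ) (hg0D : Measurable[D] g0)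
    (hg0 : p[Set.indicator {w : X × Y × Λ | w.1 ∈ J ∧ w.2.1 ∈ K} (fun _ => (1 : ℝ)) |
        MeasurableSpace.comap (fun ω : X × Y × Λ => ω.2.2) mΛ]
      =ᵐ[p] fun ω => g0 ω.2.2) :
    ∃ gp : X × Y × Λ → ℝ,
      StronglyMeasurable[MeasurableSpace.comap (fun ω : X × Y × Λ => ω.2.2) D] gp ∧
      (∀ x, ‖gp x‖ ≤ 1) ∧
      (p[Set.indicator {w : X × Y × Λ | w.1 ∈ J ∧ w.2.1 ∈ K} (fun _ => (1 : ℝ)) |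
          MeasurableSpace.comap (fun ω : X × Y × Λ => ω.2.2) mΛ] =ᵐ[p] gp) ∧
      (p[Set.indicator {w : X × Y × Λ | w.1 ∈ J ∧ w.2.1 ∈ K} (fun _ => (1 : ℝ)) |
          MeasurableSpace.comap (fun ω : X × Y × Λ => ω.2.2) D] =ᵐ[p] gp) := by
  set π : X × Y × Λ → Λ := fun ω => ω.2.2 with hπdef
  have hπ : @Measurable (X × Y × Λ) Λ mP mΛ π := measurable_snd.snd
  have hmL_le : MeasurableSpace.comap π mΛ ≤ mP := hπ.comap_le
  have hmD_le_mL : MeasurableSpace.comap π D ≤ MeasurableSpace.comap π mΛ :=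
    MeasurableSpace.comap_mono hDsub
  set f : X × Y × Λ → ℝ :=
    Set.indicator {w : X × Y × Λ | w.1 ∈ J ∧ w.2.1 ∈ K} (fun _ => (1 : ℝ)) with hfdef
  have hfset : MeasurableSet[mP] {w : X × Y × Λ | w.1 ∈ J ∧ w.2.1 ∈ K} :=
    MeasurableSet.inter (measurable_fst hJ) (measurable_snd.fst hK)
  have hf0 : ∀ x, 0 ≤ f x := fun x => Set.indicator_nonneg (fun _ _ => zero_le_one) x
  have hf1 : ∀ x, f x ≤ 1 := fun x => by
    by_cases h : x ∈ {w : X × Y × Λ | w.1 ∈ J ∧ w.2.1 ∈ K} <;> simp [hfdef, Set.indicator_apply, h]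
  have hfb : ∀ x, ‖f x‖ ≤ 1 := fun x => by
    rw [Real.norm_eq_abs, abs_le]; exact ⟨by linarith [hf0 x], hf1 x⟩
  have hfi : Integrable f p :=
    int_bdd_sm ((stronglyMeasurable_const.indicator hfset)) hfb
  obtain ⟨hc0, hc1⟩ := condexp_mem01 hmL_le hfi hf0 hf1
  -- the composed candidate
  set gp : X × Y × Λ → ℝ := fun ω => trunc g0 (π ω) with hgpdef
  have hgp_sm : StronglyMeasurable[MeasurableSpace.comap π D] gp := by
    have : Measurable[MeasurableSpace.comap π D] gp := by
      have hπD : @Measurable (X × Y × Λ) Λ (MeasurableSpace.comap π D) D π :=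
        fun s hs => ⟨s, hs, rfl⟩
      exact (trunc_meas hg0D).comp hπD
    exact this.stronglyMeasurable
  have hgp_bdd : ∀ x, ‖gp x‖ ≤ 1 := fun x => trunc_bdd g0 (π x)
  have hgp_int : Integrable gp p :=
    int_bdd_sm (hgp_sm.mono (hmD_le_mL.trans hmL_le)) hgp_bdd
  have hgL : p[f | MeasurableSpace.comap π mΛ] =ᵐ[p] gp := by
    have h0' : 0 ≤ᵐ[p] fun ω => g0 (π ω) := by
      filter_upwards [hg0, hc0] with x h1 h2
      rw [← h1]; exact h2
    have h1' : (fun ω => g0 (π ω)) ≤ᵐ[p] fun _ => (1:ℝ) := by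
      filter_upwards [hg0, hc1] with x h1 h2
      rw [← h1]; exact h2
    have htr : (fun ω => trunc g0 (π ω)) =ᵐ[p] fun ω => g0 (π ω) := by
      have := trunc_ae_eq (μ := p) h0' h1'
      exact this
    exact (hg0.trans htr.symm)
  refine ⟨gp, hgp_sm, hgp_bdd, hgL, ?_⟩
  exact tower hmD_le_mL hmL_le hgp_sm hgp_int hgL

lemma bmul {a b : ℝ} (ha : ‖a‖ ≤ 1) (hb : ‖b‖ ≤ 1) : ‖a * b‖ ≤ 1 := by
  rw [norm_mul]
  calc ‖a‖ * ‖b‖ ≤ 1 * 1 := mul_le_mul ha hb (norm_nonneg b) zero_le_one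
  _ = 1 := one_mul 1

/-- `E[1_L∘π | 𝒴 ⊗ 𝒟] = E[1_L∘π | 𝒟]` given that conditional probabilities of `Y`-sets
given `ℒ` factor through `𝒟`. -/
lemma claimB (p : Measure (X × Y × Λ)) [IsProbabilityMeasure p]
    (D : MeasurableSpace Λ) (hDsub : D ≤ mΛ)
    (hU : ∀ K : Set Y, MeasurableSet[mY] K → ∃ gp : X × Y × Λ → ℝ,
      StronglyMeasurable[MeasurableSpace.comap (fun ω : X × Y × Λ => ω.2.2) D] gp ∧
      (∀ x, ‖gp x‖ ≤ 1) ∧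
      (p[(fun ω : X × Y × Λ => Set.indicator K (fun _ => (1:ℝ)) ω.2.1) |
          MeasurableSpace.comap (fun ω : X × Y × Λ => ω.2.2) mΛ] =ᵐ[p] gp))
    (L : Set Λ) (hL : MeasurableSet[mΛ] L) :
    ∃ e : X × Y × Λ → ℝ,
      StronglyMeasurable[MeasurableSpace.comap (fun ω : X × Y × Λ => ω.2.2) D] e ∧
      (∀ x, ‖e x‖ ≤ 1) ∧
      (p[(fun ω : X × Y × Λ => Set.indicator L (fun _ => (1:ℝ)) ω.2.2) |
          MeasurableSpace.comap (fun ω : X × Y × Λ => ω.2.2) D] =ᵐ[p] e) ∧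
      (p[(fun ω : X × Y × Λ => Set.indicator L (fun _ => (1:ℝ)) ω.2.2) |
          (MeasurableSpace.comap (fun ω : X × Y × Λ => ω.2.1) mY) ⊔
            (MeasurableSpace.comap (fun ω : X × Y × Λ => ω.2.2) D)] =ᵐ[p] e) := by
  set π : X × Y × Λ → Λ := fun ω => ω.2.2 with hπdef
  set yf : X × Y × Λ → Y := fun ω => ω.2.1 with hyfdef
  have hπ : @Measurable (X × Y × Λ) Λ mP mΛ π := measurable_snd.snd
  have hy : @Measurable (X × Y × Λ) Y mP mY yf := measurable_snd.fst
  have hmL_le : MeasurableSpace.comap π mΛ ≤ mP := hπ.comap_le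
  have hmY_le : MeasurableSpace.comap yf mY ≤ mP := hy.comap_le
  have hmD_le_mL : MeasurableSpace.comap π D ≤ MeasurableSpace.comap π mΛ :=
    MeasurableSpace.comap_mono hDsub
  have hmD_le : MeasurableSpace.comap π D ≤ mP := hmD_le_mL.trans hmL_le
  have hYD_le : (MeasurableSpace.comap yf mY) ⊔ (MeasurableSpace.comap π D) ≤ mP :=
    sup_le hmY_le hmD_le
  -- the function 1_L ∘ π
  set cL : X × Y × Λ → ℝ := fun ω => Set.indicator L (fun _ => (1:ℝ)) (π ω) with hcLdef
  have hcL_sm : StronglyMeasurable[MeasurableSpace.comap π mΛ] cL := sm_ind_comap le_rfl hL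
  have hcL_int : Integrable cL p := int_bdd_sm (hcL_sm.mono hmL_le) (ind_bdd L π)
  have hcL0 : ∀ x, 0 ≤ cL x := ind_nonneg L π
  have hcL1 : ∀ x, cL x ≤ 1 := ind_le_one L π
  -- nice version of E[cL | 𝒟]
  obtain ⟨he_sm, he_bdd, he_eq⟩ := nice_condexp hmD_le hcL_int hcL0 hcL1
  set e : X × Y × Λ → ℝ := trunc (p[cL | MeasurableSpace.comap π D]) with hedef
  have he_int : Integrable e p := int_bdd_sm (he_sm.mono hmD_le) he_bdd
  refine ⟨e, he_sm, he_bdd, he_eq.symm, ?_⟩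
  -- it suffices to check set integrals over 𝒴 ⊗ 𝒟
  have hIO : ∀ s : Set (X × Y × Λ), Integrable e (p.restrict s) := fun s => he_int.restrict
  refine (ae_eq_condExp_of_forall_setIntegral_eq (m₀ := mP) hYD_le hcL_int
    (fun s _ _ => hIO s) ?_
    ⟨e, he_sm.mono le_sup_right, ae_eq_refl _⟩).symm
  intro s hs _
  refine pi_ind (m0 := mP) (MeasurableSpace.comap yf mY) (MeasurableSpace.comap π D)
    hmY_le hmD_le he_int hcL_int ?_ s hs
  rintro s' t' ⟨K', hK', rfl⟩ ⟨L', hL', rfl⟩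
  -- rectangle case
  obtain ⟨gu, hgu_sm, hgu_bdd, hgu⟩ := hU K' hK'
  have hgu_int : Integrable gu p := int_bdd_sm (hgu_sm.mono hmD_le) hgu_bdd
  set cY : X × Y × Λ → ℝ := fun ω => Set.indicator K' (fun _ => (1:ℝ)) (yf ω) with hcYdef
  set cD : X × Y × Λ → ℝ := fun ω => Set.indicator L' (fun _ => (1:ℝ)) (π ω) with hcDdef
  have hcY_sm : StronglyMeasurable[MeasurableSpace.comap yf mY] cY := sm_ind_comap le_rfl hK'
  have hcY_int : Integrable cY p := int_bdd_sm (hcY_sm.mono hmY_le) (ind_bdd K' yf)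
  have hcD_smD : StronglyMeasurable[MeasurableSpace.comap π D] cD := sm_ind_comap le_rfl hL'
  have hs0 : MeasurableSet[mP] (yf ⁻¹' K' ∩ π ⁻¹' L') :=
    MeasurableSet.inter (hy hK') (hπ (hDsub _ hL'))
  have hind : ∀ x : X × Y × Λ, Set.indicator (yf ⁻¹' K' ∩ π ⁻¹' L') (fun _ => (1:ℝ)) x
      = cY x * cD x := by
    intro x
    simp only [hcYdef, hcDdef, Set.indicator_apply, Set.mem_inter_iff, Set.mem_preimage]
    by_cases h1 : yf x ∈ K' <;> by_cases h2 : π x ∈ L' <;> simp [h1, h2]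
  rw [setIntegral_mul_indicator (m0 := mP) hs0 e, setIntegral_mul_indicator (m0 := mP) hs0 cL]
  calc ∫ x, Set.indicator (yf ⁻¹' K' ∩ π ⁻¹' L') (fun _ => (1:ℝ)) x * e x ∂p
      = ∫ x, (cD x * e x) * cY x ∂p := by
        refine integral_congr_ae (ae_of_all _ fun x => ?_)
        simp only [hind]; ring
    _ = ∫ x, (cD x * e x) * (p[cY | MeasurableSpace.comap π mΛ]) x ∂p := by
        refine (aux_dual hmL_le hcY_int ((hcD_smD.mul he_sm).mono hmD_le_mL) ?_).symm
        exact fun x => bmul (ind_bdd L' π x) (he_bdd x)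
    _ = ∫ x, (cD x * gu x) * e x ∂p := by
        refine integral_congr_ae ?_
        filter_upwards [hgu] with x hx
        rw [hx]; ring
    _ = ∫ x, (cD x * gu x) * (p[cL | MeasurableSpace.comap π D]) x ∂p := by
        refine integral_congr_ae ?_
        filter_upwards [he_eq] with x hx
        rw [hx]
    _ = ∫ x, (cD x * gu x) * cL x ∂p := by
        refine aux_dual hmD_le hcL_int (hcD_smD.mul hgu_sm) ?_
        exact fun x => bmul (ind_bdd L' π x) (hgu_bdd x)
    _ = ∫ x, (cD x * cL x) * gu x ∂p := by
        refine integral_congr_ae (ae_of_all _ fun x => ?_); ring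
    _ = ∫ x, (cD x * cL x) * (p[cY | MeasurableSpace.comap π mΛ]) x ∂p := by
        refine integral_congr_ae ?_
        filter_upwards [hgu] with x hx
        rw [hx]
    _ = ∫ x, (cD x * cL x) * cY x ∂p := by
        refine aux_dual hmL_le hcY_int (((hcD_smD.mono hmD_le_mL).mul hcL_sm)) ?_
        exact fun x => bmul (ind_bdd L' π x) (ind_bdd L π x)
    _ = ∫ x, Set.indicator (yf ⁻¹' K' ∩ π ⁻¹' L') (fun _ => (1:ℝ)) x * cL x ∂p := by
        refine integral_congr_ae (ae_of_all _ fun x => ?_)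
        simp only [hind]; ring

lemma stmt_core (p : Measure (X × Y × Λ)) [IsProbabilityMeasure p]
    (D : MeasurableSpace Λ) (hDsub : D ≤ mΛ)
    (hfac : ∀ (J : Set X) (K : Set Y), MeasurableSet[mX] J → MeasurableSet[mY] K →
      ∃ g : Λ → ℝ, Measurable[D] g ∧
        p[Set.indicator {w : X × Y × Λ | w.1 ∈ J ∧ w.2.1 ∈ K} (fun _ => (1 : ℝ)) |
            MeasurableSpace.comap (fun ω : X × Y × Λ => ω.2.2) mΛ]
          =ᵐ[p] (fun ω => g ω.2.2))
    (J : Set X) (hJ : MeasurableSet[mX] J) :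
    p[Set.indicator {w : X × Y × Λ | w.1 ∈ J} (fun _ => (1 : ℝ)) |
        (MeasurableSpace.comap (fun ω : X × Y × Λ => ω.2.1) mY) ⊔
          (MeasurableSpace.comap (fun ω : X × Y × Λ => ω.2.2) mΛ)]
      =ᵐ[p]
    p[Set.indicator {w : X × Y × Λ | w.1 ∈ J} (fun _ => (1 : ℝ)) |
        (MeasurableSpace.comap (fun ω : X × Y × Λ => ω.2.1) mY) ⊔
          (MeasurableSpace.comap (fun ω : X × Y × Λ => ω.2.2) D)] := by
  set π : X × Y × Λ → Λ := fun ω => ω.2.2 with hπdef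
  set yf : X × Y × Λ → Y := fun ω => ω.2.1 with hyfdef
  have hπ : @Measurable (X × Y × Λ) Λ mP mΛ π := measurable_snd.snd
  have hy : @Measurable (X × Y × Λ) Y mP mY yf := measurable_snd.fst
  have hmL_le : MeasurableSpace.comap π mΛ ≤ mP := hπ.comap_le
  have hmY_le : MeasurableSpace.comap yf mY ≤ mP := hy.comap_le
  have hmD_le_mL : MeasurableSpace.comap π D ≤ MeasurableSpace.comap π mΛ :=
    MeasurableSpace.comap_mono hDsub
  have hmD_le : MeasurableSpace.comap π D ≤ mP := hmD_le_mL.trans hmL_le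
  have hYL_le : (MeasurableSpace.comap yf mY) ⊔ (MeasurableSpace.comap π mΛ) ≤ mP :=
    sup_le hmY_le hmL_le
  have hYD_le : (MeasurableSpace.comap yf mY) ⊔ (MeasurableSpace.comap π D) ≤ mP :=
    sup_le hmY_le hmD_le
  have hYD_le_YL : (MeasurableSpace.comap yf mY) ⊔ (MeasurableSpace.comap π D)
      ≤ (MeasurableSpace.comap yf mY) ⊔ (MeasurableSpace.comap π mΛ) :=
    sup_le_sup le_rfl hmD_le_mL
  -- the indicator of J
  set fJ : X × Y × Λ → ℝ :=
    Set.indicator {w : X × Y × Λ | w.1 ∈ J} (fun _ => (1 : ℝ)) with hfJdef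
  have hfJset : MeasurableSet[mP] {w : X × Y × Λ | w.1 ∈ J} := measurable_fst hJ
  have hfJ_sm : StronglyMeasurable[mP] fJ := stronglyMeasurable_const.indicator hfJset
  have hfJ0 : ∀ x, 0 ≤ fJ x := fun x => Set.indicator_nonneg (fun _ _ => zero_le_one) x
  have hfJ1 : ∀ x, fJ x ≤ 1 := fun x => by
    by_cases h : x ∈ {w : X × Y × Λ | w.1 ∈ J} <;> simp [hfJdef, Set.indicator_apply, h]
  have hfJb : ∀ x, ‖fJ x‖ ≤ 1 := fun x => by
    rw [Real.norm_eq_abs, abs_le]; exact ⟨by linarith [hfJ0 x], hfJ1 x⟩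
  have hfJ_int : Integrable fJ p := int_bdd_sm hfJ_sm hfJb
  -- hypothesis for claimB
  have hU : ∀ K : Set Y, MeasurableSet[mY] K → ∃ gp : X × Y × Λ → ℝ,
      StronglyMeasurable[MeasurableSpace.comap π D] gp ∧
      (∀ x, ‖gp x‖ ≤ 1) ∧
      (p[(fun ω : X × Y × Λ => Set.indicator K (fun _ => (1:ℝ)) ω.2.1) |
          MeasurableSpace.comap π mΛ] =ᵐ[p] gp) := by
    intro K hK
    obtain ⟨g0, hg0D, hg0⟩ := hfac Set.univ K MeasurableSet.univ hK
    obtain ⟨gp, h1, h2, h3, _⟩ := key (mΛ := mΛ) p D hDsub Set.univ K MeasurableSet.univ hK g0 hg0D hg0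
    refine ⟨gp, h1, h2, ?_⟩
    have hsets : Set.indicator {w : X × Y × Λ | w.1 ∈ Set.univ ∧ w.2.1 ∈ K} (fun _ => (1:ℝ))
        = fun ω : X × Y × Λ => Set.indicator K (fun _ => (1:ℝ)) ω.2.1 := by
      funext ω; by_cases h : ω.2.1 ∈ K <;> simp [Set.indicator_apply, h]
    rw [← hsets]
    exact h3
  -- nice version of E[fJ | 𝒴 ⊗ 𝒟]
  obtain ⟨hg_sm, hg_bdd, hg_eq⟩ := nice_condexp hYD_le hfJ_int hfJ0 hfJ1
  set gg : X × Y × Λ → ℝ := trunc (p[fJ |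
    (MeasurableSpace.comap yf mY) ⊔ (MeasurableSpace.comap π D)]) with hggdef
  -- uniqueness of conditional expectation w.r.t. 𝒴 ⊗ ℒ
  have hIO : ∀ s : Set (X × Y × Λ), Integrable (p[fJ |
      (MeasurableSpace.comap yf mY) ⊔ (MeasurableSpace.comap π D)]) (p.restrict s) :=
    fun s => integrable_condExp.restrict
  refine (ae_eq_condExp_of_forall_setIntegral_eq (m₀ := mP) hYL_le hfJ_int
    (fun s _ _ => hIO s) ?_
    ((stronglyMeasurable_condExp.mono hYD_le_YL).aestronglyMeasurable)).symm
  intro s hs _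
  refine pi_ind (m0 := mP) (MeasurableSpace.comap yf mY) (MeasurableSpace.comap π mΛ)
    hmY_le hmL_le integrable_condExp hfJ_int ?_ s hs
  rintro s' t' ⟨K, hK, rfl⟩ ⟨L, hL, rfl⟩
  -- data for the rectangle
  obtain ⟨g0, hg0D, hg0⟩ := hfac J K hJ hK
  obtain ⟨gJK, hJK_sm, hJK_bdd, hJK_L, hJK_D⟩ := key (mΛ := mΛ) p D hDsub J K hJ hK g0 hg0D hg0
  obtain ⟨e, he_sm, he_bdd, he_D, he_YD⟩ := claimB (mΛ := mΛ) p D hDsub hU L hL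
  set cY : X × Y × Λ → ℝ := fun ω => Set.indicator K (fun _ => (1:ℝ)) (yf ω) with hcYdef
  set cL : X × Y × Λ → ℝ := fun ω => Set.indicator L (fun _ => (1:ℝ)) (π ω) with hcLdef
  set fJK : X × Y × Λ → ℝ :=
    Set.indicator {w : X × Y × Λ | w.1 ∈ J ∧ w.2.1 ∈ K} (fun _ => (1 : ℝ)) with hfJKdef
  have hcY_sm : StronglyMeasurable[MeasurableSpace.comap yf mY] cY := sm_ind_comap le_rfl hK
  have hcY_int : Integrable cY p := int_bdd_sm (hcY_sm.mono hmY_le) (ind_bdd K yf)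
  have hcL_sm : StronglyMeasurable[MeasurableSpace.comap π mΛ] cL := sm_ind_comap le_rfl hL
  have hcL_int : Integrable cL p := int_bdd_sm (hcL_sm.mono hmL_le) (ind_bdd L π)
  have hfJKset : MeasurableSet[mP] {w : X × Y × Λ | w.1 ∈ J ∧ w.2.1 ∈ K} :=
    MeasurableSet.inter (measurable_fst hJ) (measurable_snd.fst hK)
  have hfJK_sm : StronglyMeasurable[mP] fJK := stronglyMeasurable_const.indicator hfJKset
  have hfJK_b : ∀ x, ‖fJK x‖ ≤ 1 := fun x => by
    by_cases h : x ∈ {w : X × Y × Λ | w.1 ∈ J ∧ w.2.1 ∈ K} <;>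
      simp [hfJKdef, Set.indicator_apply, h]
  have hfJK_int : Integrable fJK p := int_bdd_sm hfJK_sm hfJK_b
  have he_int : Integrable e p := int_bdd_sm (he_sm.mono hmD_le) he_bdd
  have hgJK_int : Integrable gJK p := int_bdd_sm (hJK_sm.mono hmD_le) hJK_bdd
  have hs0 : MeasurableSet[mP] (yf ⁻¹' K ∩ π ⁻¹' L) :=
    MeasurableSet.inter (hy hK) (hπ hL)
  have hind : ∀ x : X × Y × Λ, Set.indicator (yf ⁻¹' K ∩ π ⁻¹' L) (fun _ => (1:ℝ)) x
      = cY x * cL x := by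
    intro x
    simp only [hcYdef, hcLdef, Set.indicator_apply, Set.mem_inter_iff, Set.mem_preimage]
    by_cases h1 : yf x ∈ K <;> by_cases h2 : π x ∈ L <;> simp [h1, h2]
  have hfJKid : ∀ x : X × Y × Λ, fJK x = cY x * fJ x := by
    intro x
    simp only [hfJKdef, hcYdef, hfJdef, Set.indicator_apply, Set.mem_setOf_eq]
    by_cases h1 : x.1 ∈ J <;> by_cases h2 : x.2.1 ∈ K <;>
      simp [h1, h2, hyfdef]
  -- the product cY * cL
  set v : X × Y × Λ → ℝ := fun x => cY x * cL x with hvdef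
  have hv_sm : StronglyMeasurable[mP] v :=
    (hcY_sm.mono hmY_le).mul (hcL_sm.mono hmL_le)
  have hv_int : Integrable v p :=
    int_bdd_sm hv_sm (fun x => bmul (ind_bdd K yf x) (ind_bdd L π x))
  -- pull-out property at 𝒴 ⊗ 𝒟
  have hpull : p[v | (MeasurableSpace.comap yf mY) ⊔ (MeasurableSpace.comap π D)]
      =ᵐ[p] fun x => cY x *
        (p[cL | (MeasurableSpace.comap yf mY) ⊔ (MeasurableSpace.comap π D)]) x := by
    have := condExp_mul_of_stronglyMeasurable_left (μ := p)
      (m := (MeasurableSpace.comap yf mY) ⊔ (MeasurableSpace.comap π D))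
      (hcY_sm.mono le_sup_left) (by exact hv_int) hcL_int
    exact this
  rw [setIntegral_mul_indicator (m0 := mP) hs0, setIntegral_mul_indicator (m0 := mP) hs0]
  calc ∫ x, Set.indicator (yf ⁻¹' K ∩ π ⁻¹' L) (fun _ => (1:ℝ)) x *
        (p[fJ | (MeasurableSpace.comap yf mY) ⊔ (MeasurableSpace.comap π D)]) x ∂p
      = ∫ x, gg x * v x ∂p := by
        refine integral_congr_ae ?_
        filter_upwards [hg_eq] with x hx
        simp only [hind]
        rw [hx]; ring
    _ = ∫ x, gg x * (p[v | (MeasurableSpace.comap yf mY) ⊔ (MeasurableSpace.comap π D)]) x ∂p := by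
        exact (aux_dual hYD_le hv_int hg_sm hg_bdd).symm
    _ = ∫ x, (cY x * e x) * gg x ∂p := by
        refine integral_congr_ae ?_
        filter_upwards [hpull, he_YD] with x hx1 hx2
        rw [hx1, hx2]; ring
    _ = ∫ x, (cY x * e x) * fJ x ∂p := by
        have hc_sm : StronglyMeasurable[(MeasurableSpace.comap yf mY) ⊔
            (MeasurableSpace.comap π D)] (fun x => cY x * e x) :=
          (hcY_sm.mono le_sup_left).mul (he_sm.mono le_sup_right)
        have hc_bdd : ∀ x, ‖cY x * e x‖ ≤ 1 := fun x => bmul (ind_bdd K yf x) (he_bdd x)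
        have h1 := aux_dual hYD_le hfJ_int hc_sm hc_bdd
        calc ∫ x, (cY x * e x) * gg x ∂p
            = ∫ x, (cY x * e x) * (p[fJ | (MeasurableSpace.comap yf mY) ⊔
                (MeasurableSpace.comap π D)]) x ∂p := by
              refine integral_congr_ae ?_
              filter_upwards [hg_eq] with x hx
              rw [hx]
          _ = ∫ x, (cY x * e x) * fJ x ∂p := h1
    _ = ∫ x, e x * fJK x ∂p := by
        refine integral_congr_ae (ae_of_all _ fun x => ?_)
        simp only [hfJKid]; ring
    _ = ∫ x, e x * (p[fJK | MeasurableSpace.comap π D]) x ∂p :=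
        (aux_dual hmD_le hfJK_int he_sm he_bdd).symm
    _ = ∫ x, gJK x * e x ∂p := by
        refine integral_congr_ae ?_
        filter_upwards [hJK_D] with x hx
        rw [hx]; ring
    _ = ∫ x, gJK x * (p[cL | MeasurableSpace.comap π D]) x ∂p := by
        refine integral_congr_ae ?_
        filter_upwards [he_D] with x hx
        rw [hx]
    _ = ∫ x, gJK x * cL x ∂p := aux_dual hmD_le hcL_int hJK_sm hJK_bdd
    _ = ∫ x, cL x * (p[fJK | MeasurableSpace.comap π mΛ]) x ∂p := by
        refine integral_congr_ae ?_
        filter_upwards [hJK_L] with x hx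
        rw [hx]; ring
    _ = ∫ x, cL x * fJK x ∂p := aux_dual hmL_le hfJK_int hcL_sm (ind_bdd L π)
    _ = ∫ x, Set.indicator (yf ⁻¹' K ∩ π ⁻¹' L) (fun _ => (1:ℝ)) x * fJ x ∂p := by
        refine integral_congr_ae (ae_of_all _ fun x => ?_)
        simp only [hind, hfJKid]; ring
end prod

theorem stmt_14 {X Y Λ : Type*} [MeasurableSpace X] [MeasurableSpace Y]
    [mΛ : MeasurableSpace Λ]
    (p : Measure (X × Y × Λ)) [IsProbabilityMeasure p]
    (D : MeasurableSpace Λ) (hDsub : D ≤ mΛ)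
    -- the σ-algebras ℒ, 𝒴 ⊗ ℒ, 𝒴 ⊗ 𝒟 on the product space
    (mL mYL mYD : MeasurableSpace (X × Y × Λ))
    (hL : mL = MeasurableSpace.comap (fun ω : X × Y × Λ => ω.2.2) mΛ)
    (hYL : mYL = (MeasurableSpace.comap (fun ω : X × Y × Λ => ω.2.1) inferInstance) ⊔
      (MeasurableSpace.comap (fun ω : X × Y × Λ => ω.2.2) mΛ))
    (hYD : mYD = (MeasurableSpace.comap (fun ω : X × Y × Λ => ω.2.1) inferInstance) ⊔
      (MeasurableSpace.comap (fun ω : X × Y × Λ => ω.2.2) D))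
    -- conditional probabilities of rectangles given ℒ factor through 𝒟
    (hfac : ∀ (J : Set X) (K : Set Y), MeasurableSet J → MeasurableSet K →
      ∃ g : Λ → ℝ, Measurable[D] g ∧
        p[Set.indicator {w : X × Y × Λ | w.1 ∈ J ∧ w.2.1 ∈ K} (fun _ => (1 : ℝ)) | mL]
          =ᵐ[p] (fun ω => g ω.2.2)) :
    ∀ J : Set X, MeasurableSet J →
      p[Set.indicator {w : X × Y × Λ | w.1 ∈ J} (fun _ => (1 : ℝ)) | mYL]
        =ᵐ[p]
      p[Set.indicator {w : X × Y × Λ | w.1 ∈ J} (fun _ => (1 : ℝ)) | mYD] := by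
  subst hL hYL hYD
  intro J hJ
  exact stmt_core (mΛ := mΛ) p D hDsub hfac J hJ
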